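/- arXiv:2308.03875 — 2 statements merged into one kernel-verified Lean document; each statement's English description precedes it below -/
import Mathlib

section
/- For any two density matrices ρ, σ on a finite-dimensional Hilbert space and any POVM {Γ_m} (a finite family of positive semidefinite operators summing to the identity), the fidelity satisfies F(ρ,σ) ≤ (Σ_m √(tr[Γ_m ρ] · tr[Γ_m σ]))². -/
open Matrix Finset
open scoped Classical ComplexOrder

/-- The positive semidefinite square root of a matrix (junk value `0` off PSD matrices). -/
noncomputable def psdSqrt {d : Type*} [Fintype d] [DecidableEq d]
    (A : Matrix d d ℂ) : Matrix d d ℂ :=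
  if h : A.PosSemidef then
    h.1.eigenvectorUnitary.1 * diagonal ((↑) ∘ (√·) ∘ h.1.eigenvalues) *
      (star h.1.eigenvectorUnitary : Matrix d d ℂ)
  else 0

noncomputable def Matrix.PosSemidef.sqrt {d : Type*} [Fintype d] [DecidableEq d]
    {A : Matrix d d ℂ} (h : A.PosSemidef) : Matrix d d ℂ :=
  h.1.eigenvectorUnitary.1 * diagonal ((↑) ∘ (√·) ∘ h.1.eigenvalues) *
    (star h.1.eigenvectorUnitary : Matrix d d ℂ)

lemma Matrix.PosSemidef.posSemidef_sqrt {d : Type*} [Fintype d] [DecidableEq d]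
    {A : Matrix d d ℂ} (h : A.PosSemidef) : h.sqrt.PosSemidef := by
  unfold Matrix.PosSemidef.sqrt
  rw [star_eq_conjTranspose]
  refine PosSemidef.mul_mul_conjTranspose_same (PosSemidef.diagonal ?_) _
  intro i
  exact Complex.zero_le_real.mpr (Real.sqrt_nonneg _)

lemma Matrix.PosSemidef.sqrt_mul_self {d : Type*} [Fintype d] [DecidableEq d]
    {A : Matrix d d ℂ} (h : A.PosSemidef) : h.sqrt * h.sqrt = A := by
  unfold Matrix.PosSemidef.sqrt
  set U := h.1.eigenvectorUnitary with hUdef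
  have hU : ((star U : unitary (Matrix d d ℂ)) : Matrix d d ℂ) * (U : Matrix d d ℂ) = 1 :=
    mem_unitaryGroup_iff'.mp U.2
  calc (U : Matrix d d ℂ) * diagonal ((↑) ∘ (√·) ∘ h.1.eigenvalues) * ↑(star U) *
        ((U : Matrix d d ℂ) * diagonal ((↑) ∘ (√·) ∘ h.1.eigenvalues) * ↑(star U))
      = (U : Matrix d d ℂ) * (diagonal ((↑) ∘ (√·) ∘ h.1.eigenvalues) *
          diagonal ((↑) ∘ (√·) ∘ h.1.eigenvalues)) * ↑(star U) := by
        simp only [Matrix.mul_assoc]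
        rw [← Matrix.mul_assoc (↑(star U) : Matrix d d ℂ) (U : Matrix d d ℂ), hU, Matrix.one_mul]
    _ = (U : Matrix d d ℂ) * diagonal (Complex.ofReal ∘ h.1.eigenvalues) * ↑(star U) := by
        rw [diagonal_mul_diagonal]
        refine congrArg (fun D => (U : Matrix d d ℂ) * D * (↑(star U) : Matrix d d ℂ))
          (congrArg diagonal (funext fun i => ?_))
        simp only [Function.comp_apply]
        rw [← Complex.ofReal_mul, Real.mul_self_sqrt (h.eigenvalues_nonneg i)]
    _ = A := by
        have := h.1.spectral_theorem
        rw [Unitary.conjStarAlgAut_apply] at this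
        exact this.symm

/-- Uhlmann fidelity `F(ρ,σ) = (tr √(√σ ρ √σ))²`. -/
noncomputable def qFidelity {d : Type*} [Fintype d] [DecidableEq d]
    (ρ σ : Matrix d d ℂ) : ℝ :=
  ((psdSqrt (psdSqrt σ * ρ * psdSqrt σ)).trace.re) ^ 2

lemma trace_entries {d : Type*} [Fintype d] [DecidableEq d] (X Y : Matrix d d ℂ) :
    (Xᴴ * Y).trace = ∑ p : d × d, (starRingEnd ℂ) (X p.2 p.1) * Y p.2 p.1 := by
  rw [Matrix.trace, ← Finset.univ_product_univ, Finset.sum_product]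
  simp [Matrix.diag, Matrix.mul_apply, Matrix.conjTranspose_apply]

lemma trace_self_re {d : Type*} [Fintype d] [DecidableEq d] (X : Matrix d d ℂ) :
    (Xᴴ * X).trace.re = ∑ p : d × d, ‖X p.2 p.1‖ ^ 2 := by
  rw [trace_entries, Complex.re_sum]
  congr 1; ext p
  rw [mul_comm, Complex.mul_conj']
  simp [← Complex.ofReal_pow, Complex.sq_norm]

lemma trace_cs {d : Type*} [Fintype d] [DecidableEq d] (X Y : Matrix d d ℂ) :
    (Xᴴ * Y).trace.re ≤ Real.sqrt (Xᴴ * X).trace.re * Real.sqrt (Yᴴ * Y).trace.re := by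
  rw [trace_entries, Complex.re_sum, trace_self_re, trace_self_re]
  calc ∑ p : d × d, ((starRingEnd ℂ) (X p.2 p.1) * Y p.2 p.1).re
      ≤ ∑ p : d × d, ‖X p.2 p.1‖ * ‖Y p.2 p.1‖ := by
        apply Finset.sum_le_sum
        intro p _
        calc ((starRingEnd ℂ) (X p.2 p.1) * Y p.2 p.1).re
            ≤ ‖(starRingEnd ℂ) (X p.2 p.1) * Y p.2 p.1‖ := Complex.re_le_norm _
          _ = ‖X p.2 p.1‖ * ‖Y p.2 p.1‖ := by
              rw [norm_mul, Complex.norm_conj]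
    _ ≤ Real.sqrt (∑ p : d × d, ‖X p.2 p.1‖ ^ 2) *
        Real.sqrt (∑ p : d × d, ‖Y p.2 p.1‖ ^ 2) := by
        rw [← Real.sqrt_mul (by positivity)]
        rw [Real.le_sqrt (by positivity) (by positivity)]
        exact Finset.sum_mul_sq_le_sq_mul_sq _ _ _


lemma polar_aux {d : Type*} [Fintype d] [DecidableEq d] (B M : Matrix d d ℂ)
    (hM : M.PosSemidef) (hBM : Bᴴ * B = M) :
    ∃ W : Matrix d d ℂ, Wᴴ * B = hM.sqrt ∧ ((1 : Matrix d d ℂ) - Wᴴ * W).PosSemidef := by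
  set V : Matrix d d ℂ := (hM.1.eigenvectorUnitary : Matrix d d ℂ) with hVdef
  set ev : d → ℝ := hM.1.eigenvalues with hevdef
  have hV1 : V * star V = 1 := mem_unitaryGroup_iff.mp hM.1.eigenvectorUnitary.2
  have hV2 : star V * V = 1 := mem_unitaryGroup_iff'.mp hM.1.eigenvectorUnitary.2
  have key : ∀ A C : Matrix d d ℂ, (V * A * star V) * (V * C * star V) = V * (A * C) * star V := by
    intro A C
    simp only [Matrix.mul_assoc]
    rw [show star V * (V * (C * star V)) = C * star V by
      rw [← Matrix.mul_assoc, hV2, Matrix.one_mul]]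
  set g : d → ℂ := fun i => ((Real.sqrt (ev i))⁻¹ : ℝ) with hgdef
  set G : Matrix d d ℂ := V * diagonal g * star V with hGdef
  have hGh : Gᴴ = G := by
    rw [hGdef, conjTranspose_mul, conjTranspose_mul, diagonal_conjTranspose,
      star_eq_conjTranspose V, conjTranspose_conjTranspose]
    have : star g = g := by funext i; simp [hgdef]
    rw [this, Matrix.mul_assoc, ← star_eq_conjTranspose V]
  have hsq : hM.sqrt = V * diagonal (Complex.ofReal ∘ Real.sqrt ∘ ev) * star V := rfl
  have hMspec : M = V * diagonal (Complex.ofReal ∘ ev) * star V := by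
    have := hM.1.spectral_theorem
    rw [Unitary.conjStarAlgAut_apply] at this
    exact this
  have hgev : ∀ i : d, g i * ((ev i : ℝ) : ℂ) = ((Real.sqrt (ev i) : ℝ) : ℂ) := by
    intro i
    rw [hgdef, ← Complex.ofReal_mul]
    norm_cast
    rcases eq_or_lt_of_le (hM.eigenvalues_nonneg i) with h | h
    · rw [show ev i = 0 from h.symm]; simp
    · rw [inv_mul_eq_div, div_eq_iff (by positivity), Real.mul_self_sqrt h.le]
  have hGM : G * M = hM.sqrt := by
    conv_lhs => rw [hMspec]
    rw [hGdef, key, diagonal_mul_diagonal, hsq]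
    refine congrArg (fun D => V * D * star V) (congrArg diagonal (funext fun i => ?_))
    exact hgev i
  refine ⟨B * G, ?_, ?_⟩
  · rw [conjTranspose_mul, hGh, Matrix.mul_assoc, hBM, hGM]
  · have hWW : (B * G)ᴴ * (B * G)
        = V * diagonal (fun i => ((Real.sqrt (ev i) : ℝ) : ℂ) * g i) * star V := by
      rw [conjTranspose_mul, hGh, show G * Bᴴ * (B * G) = (G * M) * G by
        rw [← hBM]; simp only [Matrix.mul_assoc], hGM, hsq, hGdef, key, diagonal_mul_diagonal]
      rfl
    rw [hWW, show (1 : Matrix d d ℂ) = V * 1 * star V by rw [Matrix.mul_one, hV1]]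
    rw [show V * 1 * star V - V * diagonal (fun i => ((Real.sqrt (ev i) : ℝ) : ℂ) * g i) * star V
        = V * (1 - diagonal (fun i => ((Real.sqrt (ev i) : ℝ) : ℂ) * g i)) * star V by
      rw [Matrix.mul_sub, Matrix.sub_mul]]
    rw [star_eq_conjTranspose V]
    refine PosSemidef.mul_mul_conjTranspose_same ?_ V
    rw [← diagonal_one, diagonal_sub, posSemidef_diagonal_iff]
    intro i
    rcases eq_or_lt_of_le (hM.eigenvalues_nonneg i) with h | h
    · rw [hgdef]
      simp only [show ev i = 0 from h.symm]
      simp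
    · rw [hgdef]
      have h1 : (((Real.sqrt (ev i) : ℝ)) : ℂ) * (((Real.sqrt (ev i))⁻¹ : ℝ) : ℂ) = 1 := by
        rw [← Complex.ofReal_mul, mul_inv_cancel₀ (by positivity)]
        norm_num
      rw [h1]
      simp

lemma psd_trace_re_nonneg {d : Type*} [Fintype d] [DecidableEq d]
    {A : Matrix d d ℂ} (hA : A.PosSemidef) : 0 ≤ A.trace.re := by
  rw [Matrix.trace, Complex.re_sum]
  apply Finset.sum_nonneg
  intro i _
  have := hA.2 (Finsupp.single i 1)
  simp at this
  rw [Complex.le_def] at this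
  simpa using this.1

/-- For any POVM `{Γ_m}`, the fidelity is bounded by the squared Bhattacharyya
overlap of the induced measurement distributions. -/
theorem stmt6 {d : Type*} [Fintype d] [DecidableEq d] {m : ℕ}
    (ρ σ : Matrix d d ℂ) (hρ : ρ.PosSemidef) (hσ : σ.PosSemidef)
    (hρ1 : ρ.trace = 1) (hσ1 : σ.trace = 1)
    (Γ : Fin m → Matrix d d ℂ) (hΓ : ∀ i, (Γ i).PosSemidef)
    (hΓsum : ∑ i, Γ i = 1) :
    qFidelity ρ σ ≤ (∑ i, Real.sqrt ((Γ i * ρ).trace.re * (Γ i * σ).trace.re)) ^ 2 := by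
  have hM : (hσ.sqrt * ρ * hσ.sqrt).PosSemidef := by
    have := hρ.mul_mul_conjTranspose_same hσ.sqrt
    rwa [hσ.posSemidef_sqrt.1.eq] at this
  have hq : qFidelity ρ σ = (hM.sqrt.trace.re) ^ 2 := by
    rw [qFidelity, show psdSqrt σ = hσ.sqrt from dif_pos hσ,
      show psdSqrt (hσ.sqrt * ρ * hσ.sqrt) = hM.sqrt from dif_pos hM]
  rw [hq]
  have hBM : (hρ.sqrt * hσ.sqrt)ᴴ * (hρ.sqrt * hσ.sqrt) = hσ.sqrt * ρ * hσ.sqrt := by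
    rw [conjTranspose_mul, hσ.posSemidef_sqrt.1.eq, hρ.posSemidef_sqrt.1.eq]
    calc hσ.sqrt * hρ.sqrt * (hρ.sqrt * hσ.sqrt)
        = hσ.sqrt * (hρ.sqrt * hρ.sqrt) * hσ.sqrt := by simp only [Matrix.mul_assoc]
      _ = hσ.sqrt * ρ * hσ.sqrt := by rw [hρ.sqrt_mul_self]
  obtain ⟨W, hWB, hWW⟩ := polar_aux (hρ.sqrt * hσ.sqrt) _ hM hBM
  have contr : ∀ C : Matrix d d ℂ, ((W * C)ᴴ * (W * C)).trace.re ≤ (Cᴴ * C).trace.re := by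
    intro C
    have h1 := psd_trace_re_nonneg (hWW.conjTranspose_mul_mul_same C)
    have h2 : Cᴴ * (1 - Wᴴ * W) * C = Cᴴ * C - (W * C)ᴴ * (W * C) := by
      rw [conjTranspose_mul, Matrix.mul_sub, Matrix.sub_mul, Matrix.mul_one]
      simp only [Matrix.mul_assoc]
    rw [h2, trace_sub, Complex.sub_re] at h1
    linarith
  set γ : Fin m → Matrix d d ℂ := fun i => (hΓ i).sqrt with hγdef
  have hγγ : ∀ i, γ i * γ i = Γ i := fun i => (hΓ i).sqrt_mul_self
  have hγh : ∀ i, (γ i)ᴴ = γ i := fun i => ((hΓ i).posSemidef_sqrt).1.eq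
  have main : hM.sqrt.trace.re ≤
      ∑ i, Real.sqrt ((Γ i * ρ).trace.re * (Γ i * σ).trace.re) := by
    rw [← hWB]
    have hsplit : Wᴴ * (hρ.sqrt * hσ.sqrt) = ∑ i, Wᴴ * (hρ.sqrt * Γ i * hσ.sqrt) := by
      rw [← Finset.mul_sum]
      congr 1
      calc hρ.sqrt * hσ.sqrt = hρ.sqrt * (∑ i, Γ i) * hσ.sqrt := by
            rw [hΓsum, Matrix.mul_one]
        _ = ∑ i, hρ.sqrt * Γ i * hσ.sqrt := by rw [Finset.mul_sum, Finset.sum_mul]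
    rw [hsplit, trace_sum, Complex.re_sum]
    apply Finset.sum_le_sum
    intro i _
    set X := W * (hσ.sqrt * γ i) with hXdef
    set Y := hρ.sqrt * γ i with hYdef
    have e1 : Xᴴ * Y = γ i * (hσ.sqrt * (Wᴴ * (hρ.sqrt * γ i))) := by
      rw [hXdef, hYdef]
      simp only [conjTranspose_mul, hγh, hσ.posSemidef_sqrt.1.eq, Matrix.mul_assoc]
    have hterm : (Wᴴ * (hρ.sqrt * Γ i * hσ.sqrt)).trace = (Xᴴ * Y).trace := by
      calc (Wᴴ * (hρ.sqrt * Γ i * hσ.sqrt)).trace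
          = ((Wᴴ * (hρ.sqrt * Γ i)) * hσ.sqrt).trace := by simp only [Matrix.mul_assoc]
        _ = (hσ.sqrt * (Wᴴ * (hρ.sqrt * Γ i))).trace := trace_mul_comm _ _
        _ = ((hσ.sqrt * (Wᴴ * (hρ.sqrt * γ i))) * γ i).trace := by
            rw [← hγγ i]; simp only [Matrix.mul_assoc]
        _ = (γ i * (hσ.sqrt * (Wᴴ * (hρ.sqrt * γ i)))).trace := trace_mul_comm _ _
        _ = (Xᴴ * Y).trace := by rw [e1]
    have hCσ : ((hσ.sqrt * γ i)ᴴ * (hσ.sqrt * γ i)).trace = (Γ i * σ).trace := by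
      calc ((hσ.sqrt * γ i)ᴴ * (hσ.sqrt * γ i)).trace
          = (γ i * (hσ.sqrt * (hσ.sqrt * γ i))).trace := by
            simp only [conjTranspose_mul, hγh, hσ.posSemidef_sqrt.1.eq, Matrix.mul_assoc]
        _ = ((hσ.sqrt * (hσ.sqrt * γ i)) * γ i).trace := trace_mul_comm _ _
        _ = (σ * Γ i).trace := by
            rw [← Matrix.mul_assoc hσ.sqrt hσ.sqrt, hσ.sqrt_mul_self, Matrix.mul_assoc, hγγ i]
        _ = (Γ i * σ).trace := trace_mul_comm _ _
    have hYY : (Yᴴ * Y).trace = (Γ i * ρ).trace := by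
      calc (Yᴴ * Y).trace
          = (γ i * (hρ.sqrt * (hρ.sqrt * γ i))).trace := by
            rw [hYdef]
            simp only [conjTranspose_mul, hγh, hρ.posSemidef_sqrt.1.eq, Matrix.mul_assoc]
        _ = ((hρ.sqrt * (hρ.sqrt * γ i)) * γ i).trace := trace_mul_comm _ _
        _ = (ρ * Γ i).trace := by
            rw [← Matrix.mul_assoc hρ.sqrt hρ.sqrt, hρ.sqrt_mul_self, Matrix.mul_assoc, hγγ i]
        _ = (Γ i * ρ).trace := trace_mul_comm _ _
    have h0ρ : 0 ≤ (Γ i * ρ).trace.re := by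
      rw [← hYY]; exact psd_trace_re_nonneg (posSemidef_conjTranspose_mul_self Y)
    have h0σ : 0 ≤ (Γ i * σ).trace.re := by
      rw [← hCσ]
      exact psd_trace_re_nonneg (posSemidef_conjTranspose_mul_self (hσ.sqrt * γ i))
    have hXX : (Xᴴ * X).trace.re ≤ (Γ i * σ).trace.re := by
      refine le_trans (contr (hσ.sqrt * γ i)) (le_of_eq ?_)
      rw [hCσ]
    calc (Wᴴ * (hρ.sqrt * Γ i * hσ.sqrt)).trace.re
        = (Xᴴ * Y).trace.re := by rw [hterm]
      _ ≤ Real.sqrt (Xᴴ * X).trace.re * Real.sqrt (Yᴴ * Y).trace.re := trace_cs X Y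
      _ ≤ Real.sqrt (Γ i * σ).trace.re * Real.sqrt (Γ i * ρ).trace.re := by
          apply mul_le_mul (Real.sqrt_le_sqrt hXX) (le_of_eq (by rw [hYY]))
            (Real.sqrt_nonneg _) (Real.sqrt_nonneg _)
      _ = Real.sqrt ((Γ i * ρ).trace.re * (Γ i * σ).trace.re) := by
          rw [mul_comm, ← Real.sqrt_mul h0ρ]
  exact pow_le_pow_left₀ (psd_trace_re_nonneg hM.posSemidef_sqrt) main 2
end

section
/- Let p, q be probability distributions on a finite set S, and suppose there exist subsets A, B ⊆ S with p(A) ≥ 1-η and q(B) ≥ 1-η, and constants such that p(x) ≤ 2^{-n(a-τ)} on A and q(x) ≤ 2^{-n(b-τ)} on B, and |A ∩ B| ≤ 2^{nc}. Then the Bhattacharyya coefficient satisfies Σ_{x∈S} √(p(x)q(x)) ≤ 2^{-n((a+b)/2 - c - τ)} + 2√η. -/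
/-- Bhattacharyya coefficient bound from typical sets: if `p(A) ≥ 1-η`,
`q(B) ≥ 1-η`, `p ≤ 2^{-n(a-τ)}` on `A`, `q ≤ 2^{-n(b-τ)}` on `B` and
`|A ∩ B| ≤ 2^{nc}`, then `Σ_x √(p(x)q(x)) ≤ 2^{-n((a+b)/2 - c - τ)} + 2√η`. -/
theorem stmt13 {S : Type*} [Fintype S] [DecidableEq S] (p q : S → ℝ)
    (hp0 : ∀ x, 0 ≤ p x) (hq0 : ∀ x, 0 ≤ q x)
    (hp1 : ∑ x, p x = 1) (hq1 : ∑ x, q x = 1)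
    (A B : Finset S) (a b c τ η : ℝ) (hη : 0 ≤ η) (n : ℕ) (hn : 1 ≤ n)
    (hpA : (1 - η) ≤ ∑ x ∈ A, p x) (hqB : (1 - η) ≤ ∑ x ∈ B, q x)
    (hpAub : ∀ x ∈ A, p x ≤ (2:ℝ) ^ (-((n:ℝ) * (a - τ))))
    (hqBub : ∀ x ∈ B, q x ≤ (2:ℝ) ^ (-((n:ℝ) * (b - τ))))
    (hcard : ((A ∩ B).card : ℝ) ≤ (2:ℝ) ^ ((n:ℝ) * c)) :
    ∑ x, Real.sqrt (p x * q x)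
      ≤ (2:ℝ) ^ (-((n:ℝ) * ((a + b) / 2 - c - τ))) + 2 * Real.sqrt η := by
  classical
  -- Cauchy–Schwarz on a subset
  have key : ∀ T : Finset S, ∑ x ∈ T, Real.sqrt (p x * q x)
      ≤ Real.sqrt (∑ x ∈ T, p x) * Real.sqrt (∑ x ∈ T, q x) := by
    intro T
    have hcs := Finset.sum_mul_sq_le_sq_mul_sq T (fun x => Real.sqrt (p x))
      (fun x => Real.sqrt (q x))
    have h1 : ∑ x ∈ T, Real.sqrt (p x * q x)
        = ∑ x ∈ T, Real.sqrt (p x) * Real.sqrt (q x) := by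
      refine Finset.sum_congr rfl fun x _ => Real.sqrt_mul (hp0 x) _
    have h2 : ∑ x ∈ T, (Real.sqrt (p x))^2 = ∑ x ∈ T, p x := by
      refine Finset.sum_congr rfl fun x _ => Real.sq_sqrt (hp0 x)
    have h3 : ∑ x ∈ T, (Real.sqrt (q x))^2 = ∑ x ∈ T, q x := by
      refine Finset.sum_congr rfl fun x _ => Real.sq_sqrt (hq0 x)
    rw [h1]
    have hnn : 0 ≤ ∑ x ∈ T, Real.sqrt (p x) * Real.sqrt (q x) :=
      Finset.sum_nonneg fun x _ => mul_nonneg (Real.sqrt_nonneg _) (Real.sqrt_nonneg _)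
    rw [← Real.sqrt_mul (Finset.sum_nonneg fun x _ => hp0 x)]
    have hynn : 0 ≤ (∑ x ∈ T, p x) * (∑ x ∈ T, q x) :=
      mul_nonneg (Finset.sum_nonneg fun x _ => hp0 x) (Finset.sum_nonneg fun x _ => hq0 x)
    refine (Real.le_sqrt hnn hynn).mpr ?_
    calc (∑ x ∈ T, Real.sqrt (p x) * Real.sqrt (q x))^2
        ≤ (∑ x ∈ T, (Real.sqrt (p x))^2) * (∑ x ∈ T, (Real.sqrt (q x))^2) := hcs
      _ = (∑ x ∈ T, p x) * (∑ x ∈ T, q x) := by rw [h2, h3]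
  have hq1' : ∀ T : Finset S, ∑ x ∈ T, q x ≤ 1 := by
    intro T
    rw [← hq1]
    exact Finset.sum_le_sum_of_subset_of_nonneg (Finset.subset_univ T)
      (fun x _ _ => hq0 x)
  have hp1' : ∀ T : Finset S, ∑ x ∈ T, p x ≤ 1 := by
    intro T
    rw [← hp1]
    exact Finset.sum_le_sum_of_subset_of_nonneg (Finset.subset_univ T)
      (fun x _ _ => hp0 x)
  -- tail bounds
  have hAc : ∑ x ∈ Aᶜ, p x ≤ η := by
    have := Finset.sum_add_sum_compl A p
    rw [hp1] at this
    linarith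
  have hBc : ∑ x ∈ Bᶜ, q x ≤ η := by
    have := Finset.sum_add_sum_compl B q
    rw [hq1] at this
    linarith
  have tailA : ∑ x ∈ Aᶜ, Real.sqrt (p x * q x) ≤ Real.sqrt η := by
    calc ∑ x ∈ Aᶜ, Real.sqrt (p x * q x)
        ≤ Real.sqrt (∑ x ∈ Aᶜ, p x) * Real.sqrt (∑ x ∈ Aᶜ, q x) := key _
      _ ≤ Real.sqrt η * 1 := by
          apply mul_le_mul (Real.sqrt_le_sqrt hAc)
            (by simpa using Real.sqrt_le_sqrt (hq1' Aᶜ)) (Real.sqrt_nonneg _)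
            (Real.sqrt_nonneg _)
      _ = Real.sqrt η := mul_one _
  have tailB : ∑ x ∈ Bᶜ, Real.sqrt (p x * q x) ≤ Real.sqrt η := by
    calc ∑ x ∈ Bᶜ, Real.sqrt (p x * q x)
        ≤ Real.sqrt (∑ x ∈ Bᶜ, p x) * Real.sqrt (∑ x ∈ Bᶜ, q x) := key _
      _ ≤ 1 * Real.sqrt η := by
          apply mul_le_mul (by simpa using Real.sqrt_le_sqrt (hp1' Bᶜ))
            (Real.sqrt_le_sqrt hBc) (Real.sqrt_nonneg _) (by norm_num)
      _ = Real.sqrt η := one_mul _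
  -- main term
  have hmain : ∑ x ∈ A ∩ B, Real.sqrt (p x * q x)
      ≤ (2:ℝ) ^ (-((n:ℝ) * ((a + b) / 2 - c - τ))) := by
    have hterm : ∀ x ∈ A ∩ B, Real.sqrt (p x * q x)
        ≤ (2:ℝ) ^ (-((n:ℝ) * ((a + b) / 2 - τ))) := by
      intro x hx
      have hxA := Finset.mem_inter.1 hx |>.1
      have hxB := Finset.mem_inter.1 hx |>.2
      have h1 : p x * q x ≤ (2:ℝ) ^ (-((n:ℝ) * (a - τ))) * (2:ℝ) ^ (-((n:ℝ) * (b - τ))) :=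
        mul_le_mul (hpAub x hxA) (hqBub x hxB) (hq0 x) (le_of_lt (Real.rpow_pos_of_pos two_pos _))
      have h2 : (2:ℝ) ^ (-((n:ℝ) * (a - τ))) * (2:ℝ) ^ (-((n:ℝ) * (b - τ)))
          = (2:ℝ) ^ (-((n:ℝ) * (a - τ)) + -((n:ℝ) * (b - τ))) :=
        (Real.rpow_add two_pos _ _).symm
      calc Real.sqrt (p x * q x)
          ≤ Real.sqrt ((2:ℝ) ^ (-((n:ℝ) * (a - τ)) + -((n:ℝ) * (b - τ)))) := by
            apply Real.sqrt_le_sqrt; rw [← h2]; exact h1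
        _ = (2:ℝ) ^ ((-((n:ℝ) * (a - τ)) + -((n:ℝ) * (b - τ))) / 2) := by
            rw [Real.sqrt_eq_rpow, ← Real.rpow_mul (by norm_num)]
            ring_nf
        _ = (2:ℝ) ^ (-((n:ℝ) * ((a + b) / 2 - τ))) := by ring_nf
    calc ∑ x ∈ A ∩ B, Real.sqrt (p x * q x)
        ≤ ∑ _x ∈ A ∩ B, (2:ℝ) ^ (-((n:ℝ) * ((a + b) / 2 - τ))) :=
          Finset.sum_le_sum hterm
      _ = ((A ∩ B).card : ℝ) * (2:ℝ) ^ (-((n:ℝ) * ((a + b) / 2 - τ))) := by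
          rw [Finset.sum_const, nsmul_eq_mul]
      _ ≤ (2:ℝ) ^ ((n:ℝ) * c) * (2:ℝ) ^ (-((n:ℝ) * ((a + b) / 2 - τ))) := by
          apply mul_le_mul_of_nonneg_right hcard (le_of_lt (Real.rpow_pos_of_pos two_pos _))
      _ = (2:ℝ) ^ (-((n:ℝ) * ((a + b) / 2 - c - τ))) := by
          rw [← Real.rpow_add two_pos]; ring_nf
  -- combine
  have hsplit : ∑ x, Real.sqrt (p x * q x)
      = ∑ x ∈ A ∩ B, Real.sqrt (p x * q x) + ∑ x ∈ (A ∩ B)ᶜ, Real.sqrt (p x * q x) :=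
    (Finset.sum_add_sum_compl (A ∩ B) _).symm
  have hcompl : ∑ x ∈ (A ∩ B)ᶜ, Real.sqrt (p x * q x)
      ≤ ∑ x ∈ Aᶜ, Real.sqrt (p x * q x) + ∑ x ∈ Bᶜ, Real.sqrt (p x * q x) := by
    have hsub : (A ∩ B)ᶜ ⊆ Aᶜ ∪ Bᶜ := by
      intro x hx
      simp only [Finset.mem_compl, Finset.mem_inter, Finset.mem_union, not_and] at hx ⊢
      by_cases h : x ∈ A
      · exact Or.inr (hx h)
      · exact Or.inl h
    calc ∑ x ∈ (A ∩ B)ᶜ, Real.sqrt (p x * q x)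
        ≤ ∑ x ∈ Aᶜ ∪ Bᶜ, Real.sqrt (p x * q x) :=
          Finset.sum_le_sum_of_subset_of_nonneg hsub (fun x _ _ => Real.sqrt_nonneg _)
      _ ≤ ∑ x ∈ Aᶜ, Real.sqrt (p x * q x) + ∑ x ∈ Bᶜ, Real.sqrt (p x * q x) :=
          by
            have h : ∑ x ∈ Aᶜ ∪ Bᶜ, Real.sqrt (p x * q x) + ∑ x ∈ Aᶜ ∩ Bᶜ, Real.sqrt (p x * q x)
                = ∑ x ∈ Aᶜ, Real.sqrt (p x * q x) + ∑ x ∈ Bᶜ, Real.sqrt (p x * q x) :=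
              Finset.sum_union_inter
            have h2 : 0 ≤ ∑ x ∈ Aᶜ ∩ Bᶜ, Real.sqrt (p x * q x) :=
              Finset.sum_nonneg fun x _ => Real.sqrt_nonneg _
            linarith
  rw [hsplit]
  have := tailA
  have := tailB
  nlinarith [hmain, hcompl, tailA, tailB]
end
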